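/- For every k ∈ ℝ³ with |k| − k₃ > 0, the four vectors ω_pos,±(k) = (a₊(k)h_±(k), ±a₋(k)h_±(k)) and ω_neg,±(k) = (∓a₋(k)h_±(k), a₊(k)h_±(k)) form an orthonormal system in ℂ⁴, where a_±(k) = (1/√2)√(1 ± m/λ(k)) and λ(k) = √(|k|²+m²). -/

import Mathlib

noncomputable def knorm (k₁ k₂ k₃ : ℝ) : ℝ := Real.sqrt (k₁ ^ 2 + k₂ ^ 2 + k₃ ^ 2)

noncomputable def lam3 (m k₁ k₂ k₃ : ℝ) : ℝ := Real.sqrt (knorm k₁ k₂ k₃ ^ 2 + m ^ 2)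

noncomputable def aPlus (m k₁ k₂ k₃ : ℝ) : ℝ :=
  Real.sqrt (1 + m / lam3 m k₁ k₂ k₃) / Real.sqrt 2

noncomputable def aMinus (m k₁ k₂ k₃ : ℝ) : ℝ :=
  Real.sqrt (1 - m / lam3 m k₁ k₂ k₃) / Real.sqrt 2

noncomputable def cfac (k₁ k₂ k₃ : ℝ) : ℂ :=
  (((2 * knorm k₁ k₂ k₃ * (knorm k₁ k₂ k₃ - k₃)) ^ (-(1:ℝ)/2) : ℝ) : ℂ)

noncomputable def hPlus (k₁ k₂ k₃ : ℝ) : Fin 2 → ℂ :=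
  ![cfac k₁ k₂ k₃ * ((k₁ : ℂ) - Complex.I * k₂),
    cfac k₁ k₂ k₃ * ((knorm k₁ k₂ k₃ - k₃ : ℝ) : ℂ)]

noncomputable def hMinus (k₁ k₂ k₃ : ℝ) : Fin 2 → ℂ :=
  ![cfac k₁ k₂ k₃ * ((k₃ - knorm k₁ k₂ k₃ : ℝ) : ℂ),
    cfac k₁ k₂ k₃ * ((k₁ : ℂ) + Complex.I * k₂)]

noncomputable def omegaPos (m k₁ k₂ k₃ : ℝ) (s : Bool) : EuclideanSpace ℂ (Fin 4) :=
  let h := if s then hPlus k₁ k₂ k₃ else hMinus k₁ k₂ k₃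
  let sgn : ℂ := if s then 1 else -1
  (WithLp.equiv 2 (Fin 4 → ℂ)).symm
    ![(aPlus m k₁ k₂ k₃ : ℂ) * h 0, (aPlus m k₁ k₂ k₃ : ℂ) * h 1,
      sgn * (aMinus m k₁ k₂ k₃ : ℂ) * h 0, sgn * (aMinus m k₁ k₂ k₃ : ℂ) * h 1]

noncomputable def omegaNeg (m k₁ k₂ k₃ : ℝ) (s : Bool) : EuclideanSpace ℂ (Fin 4) :=
  let h := if s then hPlus k₁ k₂ k₃ else hMinus k₁ k₂ k₃
  let sgn : ℂ := if s then 1 else -1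
  (WithLp.equiv 2 (Fin 4 → ℂ)).symm
    ![-(sgn * (aMinus m k₁ k₂ k₃ : ℂ) * h 0), -(sgn * (aMinus m k₁ k₂ k₃ : ℂ) * h 1),
      (aPlus m k₁ k₂ k₃ : ℂ) * h 0, (aPlus m k₁ k₂ k₃ : ℂ) * h 1]

lemma knorm_sq (k₁ k₂ k₃ : ℝ) : knorm k₁ k₂ k₃ ^ 2 = k₁ ^ 2 + k₂ ^ 2 + k₃ ^ 2 := by
  unfold knorm
  exact Real.sq_sqrt (by positivity)

lemma knorm_pos {k₁ k₂ k₃ : ℝ} (hk : knorm k₁ k₂ k₃ - k₃ > 0) : 0 < knorm k₁ k₂ k₃ := by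
  have h0 : 0 ≤ knorm k₁ k₂ k₃ := Real.sqrt_nonneg _
  have h2 := knorm_sq k₁ k₂ k₃
  nlinarith [sq_nonneg k₁, sq_nonneg k₂]

lemma cfac_sq {k₁ k₂ k₃ : ℝ} (hk : knorm k₁ k₂ k₃ - k₃ > 0) :
    (cfac k₁ k₂ k₃) ^ 2 * ((k₁ : ℂ) ^ 2 + (k₂ : ℂ) ^ 2 + ((knorm k₁ k₂ k₃ : ℂ) - (k₃ : ℂ)) ^ 2) = 1 := by
  set n := knorm k₁ k₂ k₃ with hn
  have hx : (0 : ℝ) < 2 * n * (n - k₃) := by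
    have := knorm_pos hk; positivity
  have hc2 : ((2 * n * (n - k₃)) ^ (-(1:ℝ)/2)) ^ 2 = (2 * n * (n - k₃))⁻¹ := by
    rw [← Real.rpow_natCast ((2 * n * (n - k₃)) ^ (-(1:ℝ)/2)) 2, ← Real.rpow_mul hx.le]
    rw [show (-(1:ℝ)/2) * ((2:ℕ):ℝ) = -1 by norm_num, Real.rpow_neg_one]
  have hsum : k₁ ^ 2 + k₂ ^ 2 + (n - k₃) ^ 2 = 2 * n * (n - k₃) := by
    have := knorm_sq k₁ k₂ k₃
    nlinarith
  have hreal : ((2 * n * (n - k₃)) ^ (-(1:ℝ)/2)) ^ 2 * (k₁ ^ 2 + k₂ ^ 2 + (n - k₃) ^ 2) = 1 := by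
    rw [hc2, hsum]
    exact inv_mul_cancel₀ hx.ne'
  have hcast := congrArg (Complex.ofReal) hreal
  push_cast at hcast
  unfold cfac
  rw [← hn]
  linear_combination hcast

lemma a_sq_sum {m k₁ k₂ k₃ : ℝ} (hm : 0 < m) (hk : knorm k₁ k₂ k₃ - k₃ > 0) :
    ((aPlus m k₁ k₂ k₃ : ℂ)) ^ 2 + ((aMinus m k₁ k₂ k₃ : ℂ)) ^ 2 = 1 := by
  have hn := knorm_pos hk
  have hl : 0 < lam3 m k₁ k₂ k₃ := by
    unfold lam3
    positivity
  have hml : m ≤ lam3 m k₁ k₂ k₃ := by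
    have h2 : lam3 m k₁ k₂ k₃ ^ 2 = knorm k₁ k₂ k₃ ^ 2 + m ^ 2 := by
      unfold lam3; exact Real.sq_sqrt (by positivity)
    nlinarith
  have h1 : (0:ℝ) ≤ 1 + m / lam3 m k₁ k₂ k₃ := by positivity
  have h2 : (0:ℝ) ≤ 1 - m / lam3 m k₁ k₂ k₃ := by
    have : m / lam3 m k₁ k₂ k₃ ≤ 1 := (div_le_one hl).mpr hml
    linarith
  have hr : (aPlus m k₁ k₂ k₃) ^ 2 + (aMinus m k₁ k₂ k₃) ^ 2 = 1 := by
    unfold aPlus aMinus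
    rw [div_pow, div_pow, Real.sq_sqrt h1, Real.sq_sqrt h2, Real.sq_sqrt (by norm_num : (0:ℝ) ≤ 2)]
    ring
  exact_mod_cast hr

set_option maxHeartbeats 2000000 in
/-- For every `k ∈ ℝ³` with `|k| − k₃ > 0`, the four vectors `ω_pos,±(k)` and
`ω_neg,±(k)` form an orthonormal system in `ℂ⁴`. -/
theorem stmt14 (m k₁ k₂ k₃ : ℝ) (hm : 0 < m) (hk : knorm k₁ k₂ k₃ - k₃ > 0) :
    Orthonormal ℂ
      ![omegaPos m k₁ k₂ k₃ true, omegaPos m k₁ k₂ k₃ false,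
        omegaNeg m k₁ k₂ k₃ true, omegaNeg m k₁ k₂ k₃ false] := by
  have hc := cfac_sq hk
  have ha := a_sq_sum hm hk
  set A := (aPlus m k₁ k₂ k₃ : ℂ) with hA
  set B := (aMinus m k₁ k₂ k₃ : ℂ) with hB
  set C := cfac k₁ k₂ k₃ with hC
  set N := ((knorm k₁ k₂ k₃ : ℝ) : ℂ) with hN
  have hP0 : hPlus k₁ k₂ k₃ 0 = C * ((k₁ : ℂ) - Complex.I * k₂) := rfl
  have hP1 : hPlus k₁ k₂ k₃ 1 = C * (N - (k₃:ℂ)) := by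
    simp [hPlus, hC, hN]
  have hM0 : hMinus k₁ k₂ k₃ 0 = C * ((k₃:ℂ) - N) := by
    simp [hMinus, hC, hN]
  have hM1 : hMinus k₁ k₂ k₃ 1 = C * ((k₁ : ℂ) + Complex.I * k₂) := rfl
  have hCconj : (starRingEnd ℂ) C = C := by rw [hC]; exact Complex.conj_ofReal _
  rw [orthonormal_iff_ite]
  intro i j
  fin_cases i <;> fin_cases j <;>
    simp only [show ((⟨2, by omega⟩ : Fin 4)) = 2 from rfl, show ((⟨3, by omega⟩ : Fin 4)) = 3 from rfl,
      Matrix.cons_val_zero, Matrix.cons_val_one, Matrix.head_cons,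
      Matrix.cons_val_two, Matrix.cons_val_three, Matrix.tail_cons, Fin.isValue,
      Fin.mk_zero, Fin.mk_one, omegaPos, omegaNeg, if_true, if_false, Bool.false_eq_true,
      ite_true, ite_false, hP0, hP1, hM0, hM1, PiLp.inner_apply, Fin.sum_univ_four,
      WithLp.equiv_symm_apply, WithLp.ofLp_toLp, RCLike.inner_apply, map_mul, map_sub, map_add, map_neg,
      map_one, Complex.conj_ofReal, Complex.conj_I, hCconj, hA, hB, hN, Fin.mk.injEq, Fin.reduceEq,
      Nat.succ_eq_add_one, Nat.reduceAdd, reduceIte, map_ofNat] <;>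
    rw [← hA, ← hB, ← hN] <;>
    first
      | (linear_combination (A ^ 2 + B ^ 2) * hc + ha - (A ^ 2 + B ^ 2) * C ^ 2 * (k₂:ℂ) ^ 2 * Complex.I_sq)
      | ring
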